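/- arXiv:1906.03579 — 2 statements merged into one kernel-verified Lean document; each statement's English description precedes it below -/
import Mathlib

section
/- Under the full-rank condition (Σ_u α_{u,i} < 1 for every class label i), if the class of functions F satisfies Assumption 1, then letting κ'_α = max over class labels i of (1 + Σ_u α_{u,i})/(1 − Σ_u α_{u,i}), the neural network distance between the original distributions is at most κ'_α times that between the corrupted distributions: d_F(P, Q) ≤ κ'_α · d_F(P̃, Q̃). (Theorem 2, upper bound, eq. (7).) -/
open scoped BigOperators
open MeasureTheory

/-- `P` is a probability mass function on `Z`. -/
def IsPMF {Z : Type*} (P : Z → ℝ) : Prop :=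
  (∀ z, 0 ≤ P z) ∧ Summable P ∧ ∑' z, P z = 1

/-- The corrupted labeled distribution obtained by passing labels through the channel `C`:
`P̃(x,ỹ) = ∑ j, P(x,j) · C j ỹ`. -/
noncomputable def corrupt {X : Type*} {k : ℕ} (P : X × Fin k → ℝ)
    (C : Matrix (Fin k) (Fin k) ℝ) : X × Fin k → ℝ :=
  fun z => ∑ j, P (z.1, j) * C j z.2

/-- The confusion matrix `C = diag(𝟙 − Σ_u α_u) + Σ_u α_u e_u^T`, where the uncertain
labels are `m, …, m + mt − 1` (the label `Fin.natAdd m u` for `u : Fin mt`). -/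
noncomputable def confusion (m mt : ℕ) (α : Fin mt → Fin (m + mt) → ℝ) :
    Matrix (Fin (m + mt)) (Fin (m + mt)) ℝ :=
  Matrix.diagonal (fun i => 1 - ∑ u, α u i) +
    ∑ u, Matrix.vecMulVec (α u) (Pi.single (Fin.natAdd m u) 1)

/-- `‖T‖_∞ = max_i ∑_j |T i j|` for a square real matrix. -/
noncomputable def matInfNorm {k : ℕ} (T : Matrix (Fin k) (Fin k) ℝ) : ℝ :=
  ⨆ i, ∑ j, |T i j|

/-- `(T ∘ f)(x, y) = ∑_ỹ T y ỹ · f (x, ỹ)`. -/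
def chanOp {X : Type*} {k : ℕ} (T : Matrix (Fin k) (Fin k) ℝ)
    (f : X × Fin k → ℝ) : X × Fin k → ℝ :=
  fun z => ∑ j, T z.2 j * f (z.1, j)

/-- Assumption 1: `F = F₁ + F₂ + constants`, where `F₁` is invariant under the action of
matrices of unit `∞`-norm, and `F₂` consists of `[0,1]`-scalings of label-independent
functions from a class `F₂'`. -/
def Assumption1 {X : Type*} {k : ℕ} (F : Set (X × Fin k → ℝ)) : Prop :=
  ∃ F1 F2 : Set (X × Fin k → ℝ),
    F = {f | ∃ f1 ∈ F1, ∃ f2 ∈ F2, ∃ c : ℝ, f = f1 + f2 + Function.const _ c} ∧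
    (∀ T : Matrix (Fin k) (Fin k) ℝ, matInfNorm T = 1 → ∀ f ∈ F1, chanOp T f ∈ F1) ∧
    (∃ F2' : Set (X → ℝ),
      F2 = {h | ∃ g ∈ F2', ∃ a : ℝ, 0 ≤ a ∧ a ≤ 1 ∧ h = fun z => a * g z.1})

/-- Neural network distance w.r.t. a class `F` of discriminators:
`d_F(P, Q) = sup_{f ∈ F} (E_P[f] − E_Q[f])`. -/
noncomputable def nnDist {X : Type*} {k : ℕ} (F : Set (X × Fin k → ℝ))
    (P Q : X × Fin k → ℝ) : ℝ :=
  sSup ((fun f => (∑' z, P z * f z) - ∑' z, Q z * f z) '' F)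


section Aux
set_option linter.unusedSectionVars false
variable {X : Type*} [Countable X] {k : ℕ}

lemma summable_mul_of_bounded {R : X × Fin k → ℝ} (hR : Summable R) (hR0 : ∀ z, 0 ≤ R z)
    {w : X × Fin k → ℝ} {B : ℝ} (hw : ∀ z, |w z| ≤ B) :
    Summable fun z => R z * w z := by
  apply Summable.of_abs
  apply Summable.of_nonneg_of_le (fun z => abs_nonneg _) (fun z => ?_) (hR.mul_right B)
  rw [abs_mul, abs_of_nonneg (hR0 z)]
  exact mul_le_mul_of_nonneg_left (hw z) (hR0 z)

lemma tsum_prod_fin {ρ : X × Fin k → ℝ} (hρ : Summable ρ) :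
    ∑' z, ρ z = ∑' x, ∑ y, ρ (x, y) := by
  rw [Summable.tsum_prod hρ]
  exact tsum_congr fun x => tsum_fintype _

lemma corrupt_nonneg {R : X × Fin k → ℝ} (hR0 : ∀ z, 0 ≤ R z)
    {C : Matrix (Fin k) (Fin k) ℝ} (hC0 : ∀ i j, 0 ≤ C i j) (z : X × Fin k) :
    0 ≤ corrupt R C z :=
  Finset.sum_nonneg fun j _ => mul_nonneg (hR0 _) (hC0 _ _)

lemma summable_corrupt {R : X × Fin k → ℝ} (hR : Summable R) (hR0 : ∀ z, 0 ≤ R z)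
    {C : Matrix (Fin k) (Fin k) ℝ} (hC0 : ∀ i j, 0 ≤ C i j) :
    Summable (corrupt R C) := by
  have key : ∀ j : Fin k, Summable fun z : X × Fin k => R (z.1, j) * C j z.2 := by
    intro j
    have hinj : Function.Injective (fun x : X => (x, j)) := fun a b h => (Prod.ext_iff.1 h).1
    have hRj : Summable fun x : X => R (x, j) := hR.comp_injective hinj
    rw [summable_prod_of_nonneg (fun z => mul_nonneg (hR0 _) (hC0 _ _))]
    refine ⟨fun x => Summable.of_finite, ?_⟩
    have : (fun x : X => ∑' y : Fin k, R (x, j) * C j y) = fun x => R (x, j) * ∑ y, C j y := by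
      funext x
      rw [tsum_fintype, ← Finset.mul_sum]
    rw [this]
    exact hRj.mul_right _
  have : corrupt R C = fun z : X × Fin k => ∑ j, R (z.1, j) * C j z.2 := rfl
  rw [this]
  exact summable_sum fun j _ => key j

lemma tsum_corrupt_mul {R : X × Fin k → ℝ} (hR : Summable R) (hR0 : ∀ z, 0 ≤ R z)
    {C : Matrix (Fin k) (Fin k) ℝ} (hC0 : ∀ i j, 0 ≤ C i j)
    {w : X × Fin k → ℝ} {B B' : ℝ} (hw : ∀ z, |w z| ≤ B) (hw' : ∀ z, |chanOp C w z| ≤ B') :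
    ∑' z, corrupt R C z * w z = ∑' z, R z * chanOp C w z := by
  have h1 : Summable fun z => corrupt R C z * w z :=
    summable_mul_of_bounded (summable_corrupt hR hR0 hC0) (corrupt_nonneg hR0 hC0) hw
  have h2 : Summable fun z => R z * chanOp C w z := summable_mul_of_bounded hR hR0 hw'
  rw [tsum_prod_fin h1, tsum_prod_fin h2]
  refine tsum_congr fun x => ?_
  simp only [corrupt, chanOp]
  calc ∑ y, (∑ j, R (x, j) * C j y) * w (x, y)
      = ∑ y, ∑ j, R (x, j) * (C j y * w (x, y)) := by
        simp [Finset.sum_mul, mul_assoc]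
    _ = ∑ j, ∑ y, R (x, j) * (C j y * w (x, y)) := Finset.sum_comm
    _ = ∑ y, R (x, y) * ∑ j, C y j * w (x, j) := by
        simp [Finset.mul_sum]

lemma chanOp_bound (T : Matrix (Fin k) (Fin k) ℝ) {w : X × Fin k → ℝ} {B : ℝ}
    (hw : ∀ z, |w z| ≤ B) (z : X × Fin k) :
    |chanOp T w z| ≤ (∑ i, ∑ j, |T i j|) * max B 0 := by
  calc |∑ j, T z.2 j * w (z.1, j)| ≤ ∑ j, |T z.2 j * w (z.1, j)| :=
        Finset.abs_sum_le_sum_abs _ _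
    _ ≤ ∑ j, |T z.2 j| * max B 0 := Finset.sum_le_sum fun j _ => by
        rw [abs_mul]
        exact mul_le_mul_of_nonneg_left ((hw _).trans (le_max_left _ _)) (abs_nonneg _)
    _ = (∑ j, |T z.2 j|) * max B 0 := (Finset.sum_mul _ _ _).symm
    _ ≤ (∑ i, ∑ j, |T i j|) * max B 0 := by
        refine mul_le_mul_of_nonneg_right ?_ (le_max_right _ _)
        exact Finset.single_le_sum (f := fun i => ∑ j, |T i j|)
          (fun i _ => Finset.sum_nonneg fun j _ => abs_nonneg _) (Finset.mem_univ z.2)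

lemma chanOp_chanOp (C T : Matrix (Fin k) (Fin k) ℝ) (f : X × Fin k → ℝ) :
    chanOp C (chanOp T f) = chanOp (C * T) f := by
  funext z
  simp only [chanOp, Matrix.mul_apply, Finset.mul_sum, Finset.sum_mul]
  rw [Finset.sum_comm]
  exact Finset.sum_congr rfl fun l _ => Finset.sum_congr rfl fun j _ => by ring

lemma chanOp_one (f : X × Fin k → ℝ) : chanOp (1 : Matrix (Fin k) (Fin k) ℝ) f = f := by
  funext z
  simp [chanOp, Matrix.one_apply, ite_mul]

lemma chanOp_add (C : Matrix (Fin k) (Fin k) ℝ) (f g : X × Fin k → ℝ) :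
    chanOp C (f + g) = chanOp C f + chanOp C g := by
  funext z
  simp [chanOp, mul_add, Finset.sum_add_distrib]

lemma chanOp_rowsum_one {C : Matrix (Fin k) (Fin k) ℝ} (hC1 : ∀ i, ∑ j, C i j = 1)
    (g : X → ℝ) (a : ℝ) :
    chanOp C (fun z => a * g z.1) = fun z => a * g z.1 := by
  funext z
  simp only [chanOp]
  rw [← Finset.sum_mul, hC1 z.2, one_mul]

lemma chanOp_neg_one (f : X × Fin k → ℝ) :
    chanOp (-1 : Matrix (Fin k) (Fin k) ℝ) f = fun z => -(f z) := by
  funext z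
  simp [chanOp, Matrix.neg_apply, Matrix.one_apply, ite_mul]

lemma chanOp_smul (c : ℝ) (T : Matrix (Fin k) (Fin k) ℝ) (f : X × Fin k → ℝ) :
    chanOp (c • T) f = fun z => c * chanOp T f z := by
  funext z
  simp [chanOp, Finset.mul_sum, mul_assoc]

end Aux


section Mat
variable {m mt : ℕ}

noncomputable def cinvM (m mt : ℕ) (α : Fin mt → Fin (m + mt) → ℝ) :
    Matrix (Fin (m + mt)) (Fin (m + mt)) ℝ :=
  Matrix.of fun i j =>
    if (i : ℕ) < m then
      (1 - ∑ u, α u i)⁻¹ *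
        ((if i = j then 1 else 0) - ∑ u, α u i * (if j = Fin.natAdd m u then 1 else 0))
    else (if i = j then 1 else 0)

lemma ne_natAdd_of_lt {i : Fin (m + mt)} (hi : (i : ℕ) < m) (u : Fin mt) :
    i ≠ Fin.natAdd m u := by
  intro h
  have : (i : ℕ) = m + u := by rw [h]; simp
  omega

lemma confusion_apply (α : Fin mt → Fin (m + mt) → ℝ) (i j : Fin (m + mt)) :
    confusion m mt α i j =
      (if i = j then 1 - ∑ u, α u i else 0) +
        ∑ u, α u i * (if j = Fin.natAdd m u then 1 else 0) := by
  simp [confusion, Matrix.diagonal_apply, Matrix.sum_apply,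
    Matrix.vecMulVec_apply, Pi.single_apply]

variable {α : Fin mt → Fin (m + mt) → ℝ}

lemma sum_alpha_nonneg (hα0 : ∀ u i, 0 ≤ α u i) (i : Fin (m + mt)) :
    0 ≤ ∑ u, α u i :=
  Finset.sum_nonneg fun u _ => hα0 u i

lemma sum_alpha_eq_zero (hαu : ∀ (u : Fin mt) (i : Fin (m + mt)), m ≤ (i : ℕ) → α u i = 0)
    {i : Fin (m + mt)} (hi : m ≤ (i : ℕ)) : ∑ u, α u i = 0 :=
  Finset.sum_eq_zero fun u _ => hαu u i hi

lemma one_sub_sum_alpha_pos (hαu : ∀ (u : Fin mt) (i : Fin (m + mt)), m ≤ (i : ℕ) → α u i = 0)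
    (hfull : ∀ i : Fin (m + mt), (i : ℕ) < m → ∑ u, α u i < 1) (i : Fin (m + mt)) :
    0 < 1 - ∑ u, α u i := by
  rcases lt_or_ge (i : ℕ) m with h | h
  · linarith [hfull i h]
  · rw [sum_alpha_eq_zero hαu h]; norm_num

lemma A_apply_self_of_lt {i : Fin (m + mt)} (hi : (i : ℕ) < m) :
    ∑ u, α u i * (if i = Fin.natAdd m u then (1:ℝ) else 0) = 0 :=
  Finset.sum_eq_zero fun u _ => by
    rw [if_neg (ne_natAdd_of_lt hi u), mul_zero]

lemma A_rowsum (i : Fin (m + mt)) :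
    ∑ j, ∑ u, α u i * (if j = Fin.natAdd m u then (1:ℝ) else 0) = ∑ u, α u i := by
  rw [Finset.sum_comm]
  refine Finset.sum_congr rfl fun u _ => ?_
  simp [mul_ite, Finset.sum_ite_eq']

lemma confusion_nonneg (hα0 : ∀ u i, 0 ≤ α u i)
    (hαu : ∀ (u : Fin mt) (i : Fin (m + mt)), m ≤ (i : ℕ) → α u i = 0)
    (hfull : ∀ i : Fin (m + mt), (i : ℕ) < m → ∑ u, α u i < 1) (i j : Fin (m + mt)) :
    0 ≤ confusion m mt α i j := by
  rw [confusion_apply]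
  have h1 : (0:ℝ) ≤ if i = j then 1 - ∑ u, α u i else 0 := by
    split
    · linarith [one_sub_sum_alpha_pos hαu hfull i]
    · exact le_refl 0
  have h2 : (0:ℝ) ≤ ∑ u, α u i * (if j = Fin.natAdd m u then (1:ℝ) else 0) :=
    Finset.sum_nonneg fun u _ => mul_nonneg (hα0 u i) (by positivity)
  linarith

lemma confusion_rowsum (i : Fin (m + mt)) : ∑ j, confusion m mt α i j = 1 := by
  simp only [confusion_apply]
  rw [Finset.sum_add_distrib, A_rowsum]
  have : ∑ j, (if i = j then 1 - ∑ u, α u i else 0) = 1 - ∑ u, α u i := by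
    simp [Finset.sum_ite_eq]
  rw [this]
  ring

lemma confusion_mul_cinv
    (hαu : ∀ (u : Fin mt) (i : Fin (m + mt)), m ≤ (i : ℕ) → α u i = 0)
    (hfull : ∀ i : Fin (m + mt), (i : ℕ) < m → ∑ u, α u i < 1) :
    confusion m mt α * cinvM m mt α = 1 := by
  ext i l
  rw [Matrix.mul_apply]
  have hsplit : ∀ j, confusion m mt α i j * cinvM m mt α j l =
      (if i = j then (1 - ∑ u, α u i) * cinvM m mt α j l else 0) +
        ∑ u, (if j = Fin.natAdd m u then α u i * cinvM m mt α j l else 0) := by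
    intro j
    rw [confusion_apply, add_mul, Finset.sum_mul, ite_mul, zero_mul]
    congr 1
    refine Finset.sum_congr rfl fun u _ => ?_
    rcases eq_or_ne j (Fin.natAdd m u) with h | h <;> simp [h]
  simp only [hsplit]
  rw [Finset.sum_add_distrib, Finset.sum_ite_eq, Finset.sum_comm]
  simp only [Finset.sum_ite_eq', Finset.mem_univ, if_true]
  have hrow : ∀ u : Fin mt, cinvM m mt α (Fin.natAdd m u) l = if Fin.natAdd m u = l then 1 else 0 := by
    intro u
    have : ¬ ((Fin.natAdd m u : Fin (m + mt)) : ℕ) < m := by simp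
    simp only [cinvM, Matrix.of_apply, if_neg this]
  simp only [hrow]
  rcases lt_or_ge (i : ℕ) m with him | him
  · have hcinv : cinvM m mt α i l =
        (1 - ∑ u, α u i)⁻¹ *
          ((if i = l then 1 else 0) - ∑ u, α u i * (if l = Fin.natAdd m u then 1 else 0)) := by
      simp only [cinvM, Matrix.of_apply, if_pos him]
    have hne : (1 - ∑ u, α u i) ≠ 0 := ne_of_gt (one_sub_sum_alpha_pos hαu hfull i)
    rw [hcinv, ← mul_assoc, mul_inv_cancel₀ hne, one_mul]
    have hsum : ∑ u, α u i * (if Fin.natAdd m u = l then (1:ℝ) else 0) =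
        ∑ u, α u i * (if l = Fin.natAdd m u then (1:ℝ) else 0) :=
      Finset.sum_congr rfl fun u _ => by
        congr 1
        exact if_congr eq_comm rfl rfl
    rw [hsum, Matrix.one_apply]
    ring
  · have hcinv : cinvM m mt α i l = if i = l then 1 else 0 := by
      simp only [cinvM, Matrix.of_apply, if_neg (not_lt.mpr him)]
    have hz : ∀ u : Fin mt, α u i = 0 := fun u => hαu u i him
    have hsum : ∑ u, α u i * (if Fin.natAdd m u = l then (1:ℝ) else 0) = 0 :=
      Finset.sum_eq_zero fun u _ => by rw [hz u, zero_mul]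
    rw [hcinv, hsum, sum_alpha_eq_zero hαu him, Matrix.one_apply]
    ring

lemma cinv_rowabs (hα0 : ∀ u i, 0 ≤ α u i)
    (hαu : ∀ (u : Fin mt) (i : Fin (m + mt)), m ≤ (i : ℕ) → α u i = 0)
    (hfull : ∀ i : Fin (m + mt), (i : ℕ) < m → ∑ u, α u i < 1) (i : Fin (m + mt)) :
    ∑ j, |cinvM m mt α i j| =
      if (i : ℕ) < m then (1 + ∑ u, α u i) / (1 - ∑ u, α u i) else 1 := by
  rcases lt_or_ge (i : ℕ) m with him | him
  · rw [if_pos him]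
    have hpos := one_sub_sum_alpha_pos hαu hfull i
    have heach : ∀ j, |cinvM m mt α i j| =
        (1 - ∑ u, α u i)⁻¹ *
          ((if i = j then 1 else 0) + ∑ u, α u i * (if j = Fin.natAdd m u then 1 else 0)) := by
      intro j
      simp only [cinvM, Matrix.of_apply, if_pos him]
      rw [abs_mul, abs_of_nonneg (inv_nonneg.mpr hpos.le)]
      congr 1
      rcases eq_or_ne i j with h | h
      · subst h
        rw [if_pos rfl] at *
        rw [A_apply_self_of_lt him]
        norm_num
      · rw [if_neg h] at *
        have h0 : (0:ℝ) ≤ ∑ u, α u i * (if j = Fin.natAdd m u then (1:ℝ) else 0) :=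
          Finset.sum_nonneg fun u _ => mul_nonneg (hα0 u i) (by positivity)
        rw [zero_sub, abs_neg, abs_of_nonneg h0, zero_add]
    simp only [heach]
    rw [← Finset.mul_sum, Finset.sum_add_distrib, A_rowsum]
    have h1 : ∑ j, (if i = j then (1:ℝ) else 0) = 1 := by simp [Finset.sum_ite_eq]
    rw [h1, mul_comm, ← div_eq_mul_inv]
  · rw [if_neg (not_lt.mpr him)]
    have hrow : ∀ j, cinvM m mt α i j = if i = j then 1 else 0 := fun j => by
      simp only [cinvM, Matrix.of_apply, if_neg (not_lt.mpr him)]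
    simp [hrow, apply_ite abs, Finset.sum_ite_eq]

lemma matInfNorm_eq_one_of {k : ℕ} (hk : 0 < k) {T : Matrix (Fin k) (Fin k) ℝ}
    (h : ∀ i, ∑ j, |T i j| = 1) : matInfNorm T = 1 := by
  haveI : Nonempty (Fin k) := ⟨⟨0, hk⟩⟩
  simp only [matInfNorm, h, ciSup_const]

lemma matInfNorm_exists_max {k : ℕ} (hk : 0 < k) (T : Matrix (Fin k) (Fin k) ℝ) :
    ∃ i, matInfNorm T = ∑ j, |T i j| ∧ ∀ i', ∑ j, |T i' j| ≤ ∑ j, |T i j| := by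
  haveI : Nonempty (Fin k) := ⟨⟨0, hk⟩⟩
  obtain ⟨i, hi⟩ := Finite.exists_max (fun i => ∑ j, |T i j|)
  exact ⟨i, le_antisymm (ciSup_le hi) (le_ciSup (Finite.bddAbove_range fun i => ∑ j, |T i j|) i), hi⟩

lemma matInfNorm_inv_smul {k : ℕ} (hk : 0 < k) (T : Matrix (Fin k) (Fin k) ℝ)
    (hT : 0 < matInfNorm T) : matInfNorm ((matInfNorm T)⁻¹ • T) = 1 := by
  obtain ⟨i0, h0, hmax⟩ := matInfNorm_exists_max hk T
  haveI : Nonempty (Fin k) := ⟨⟨0, hk⟩⟩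
  have habs : ∀ i, ∑ j, |((matInfNorm T)⁻¹ • T) i j| = (matInfNorm T)⁻¹ * ∑ j, |T i j| := by
    intro i
    rw [Finset.mul_sum]
    refine Finset.sum_congr rfl fun j _ => ?_
    rw [Matrix.smul_apply, smul_eq_mul, abs_mul, abs_of_nonneg (inv_nonneg.mpr hT.le)]
  have hle : ∀ i, ∑ j, |((matInfNorm T)⁻¹ • T) i j| ≤ 1 := by
    intro i
    rw [habs i]
    calc (matInfNorm T)⁻¹ * ∑ j, |T i j| ≤ (matInfNorm T)⁻¹ * ∑ j, |T i0 j| := by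
          exact mul_le_mul_of_nonneg_left (hmax i) (inv_nonneg.mpr hT.le)
      _ = 1 := by rw [← h0, inv_mul_cancel₀ (ne_of_gt hT)]
  apply le_antisymm
  · exact ciSup_le hle
  · have : (1:ℝ) = ∑ j, |((matInfNorm T)⁻¹ • T) i0 j| := by
      rw [habs i0, ← h0, inv_mul_cancel₀ (ne_of_gt hT)]
    rw [this]
    exact le_ciSup (Finite.bddAbove_range fun i => ∑ j, |((matInfNorm T)⁻¹ • T) i j|) i0

lemma matInfNorm_neg_one {k : ℕ} (hk : 0 < k) :
    matInfNorm (-1 : Matrix (Fin k) (Fin k) ℝ) = 1 := by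
  refine matInfNorm_eq_one_of hk fun i => ?_
  simp [Matrix.neg_apply, Matrix.one_apply, apply_ite abs, Finset.sum_ite_eq]

lemma matInfNorm_one {k : ℕ} (hk : 0 < k) :
    matInfNorm (1 : Matrix (Fin k) (Fin k) ℝ) = 1 := by
  refine matInfNorm_eq_one_of hk fun i => ?_
  simp [Matrix.one_apply, apply_ite abs, Finset.sum_ite_eq]

lemma matInfNorm_confusion (hα0 : ∀ u i, 0 ≤ α u i)
    (hαu : ∀ (u : Fin mt) (i : Fin (m + mt)), m ≤ (i : ℕ) → α u i = 0)
    (hfull : ∀ i : Fin (m + mt), (i : ℕ) < m → ∑ u, α u i < 1) (hm : 0 < m) :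
    matInfNorm (confusion m mt α) = 1 := by
  refine matInfNorm_eq_one_of (by omega) fun i => ?_
  have : ∀ j, |confusion m mt α i j| = confusion m mt α i j := fun j =>
    abs_of_nonneg (confusion_nonneg hα0 hαu hfull i j)
  simp only [this]
  exact confusion_rowsum i

end Mat


section MoreAux
set_option linter.unusedSectionVars false
variable {X : Type*} [Countable X] {k : ℕ}

lemma chanOp_const {C : Matrix (Fin k) (Fin k) ℝ}
    (hC1 : ∀ i, ∑ j, C i j = 1) (c : ℝ) :
    chanOp (X := X) C (Function.const (X × Fin k) c) = Function.const (X × Fin k) c := by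
  funext z
  simp only [chanOp, Function.const_apply]
  rw [← Finset.sum_mul, hC1, one_mul]

lemma chanOp_mul_fun (C : Matrix (Fin k) (Fin k) ℝ) (c : ℝ) (w : X × Fin k → ℝ) :
    chanOp C (fun z => c * w z) = fun z => c * chanOp C w z := by
  funext z
  simp only [chanOp]
  rw [Finset.mul_sum]
  exact Finset.sum_congr rfl fun j _ => by ring

lemma tsum_pmf_decomp {R : X × Fin k → ℝ}
    (hRs : Summable R) (hR0 : ∀ z, 0 ≤ R z) (hR1 : ∑' z, R z = 1)
    {f1 f2 : X × Fin k → ℝ} {B1 B2 : ℝ}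
    (h1 : ∀ z, |f1 z| ≤ B1) (h2 : ∀ z, |f2 z| ≤ B2) (c : ℝ) :
    ∑' z, R z * (f1 + f2 + Function.const (X × Fin k) c) z =
      (∑' z, R z * f1 z) + (∑' z, R z * f2 z) + c := by
  have s1 : Summable fun z => R z * f1 z := summable_mul_of_bounded hRs hR0 h1
  have s2 : Summable fun z => R z * f2 z := summable_mul_of_bounded hRs hR0 h2
  have s3 : Summable fun z => R z * c := hRs.mul_right c
  have heq : ∀ z, R z * (f1 + f2 + Function.const (X × Fin k) c) z =
      (R z * f1 z + R z * f2 z) + R z * c := by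
    intro z
    simp only [Pi.add_apply, Function.const_apply]
    ring
  calc ∑' z, R z * (f1 + f2 + Function.const (X × Fin k) c) z
      = ∑' z, ((R z * f1 z + R z * f2 z) + R z * c) := tsum_congr heq
    _ = (∑' z, (R z * f1 z + R z * f2 z)) + ∑' z, R z * c := Summable.tsum_add (s1.add s2) s3
    _ = ((∑' z, R z * f1 z) + ∑' z, R z * f2 z) + ∑' z, R z * c := by rw [Summable.tsum_add s1 s2]
    _ = (∑' z, R z * f1 z) + (∑' z, R z * f2 z) + c := by rw [tsum_mul_right, hR1, one_mul]

lemma bound_triple {f1 f2 : X × Fin k → ℝ} {B1 B2 : ℝ}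
    (h1 : ∀ z, |f1 z| ≤ B1) (h2 : ∀ z, |f2 z| ≤ B2) (c : ℝ) :
    ∀ z, |(f1 + f2 + Function.const (X × Fin k) c) z| ≤ B1 + B2 + |c| := by
  intro z
  simp only [Pi.add_apply, Function.const_apply]
  calc |f1 z + f2 z + c| ≤ |f1 z + f2 z| + |c| := abs_add_le _ _
    _ ≤ |f1 z| + |f2 z| + |c| := by linarith [abs_add_le (f1 z) (f2 z)]
    _ ≤ B1 + B2 + |c| := by linarith [h1 z, h2 z]

lemma tsum_corrupt_decomp {R : X × Fin k → ℝ}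
    (hRs : Summable R) (hR0 : ∀ z, 0 ≤ R z) (hR1 : ∑' z, R z = 1)
    {C : Matrix (Fin k) (Fin k) ℝ} (hC0 : ∀ i j, 0 ≤ C i j) (hC1 : ∀ i, ∑ j, C i j = 1)
    {f1 : X × Fin k → ℝ} {B1 : ℝ} (hB1 : ∀ z, |f1 z| ≤ B1)
    (g : X → ℝ) (a : ℝ) {B2 : ℝ} (hB2 : ∀ z : X × Fin k, |a * g z.1| ≤ B2) (c : ℝ) :
    ∑' z, corrupt R C z * (f1 + (fun z : X × Fin k => a * g z.1) + Function.const (X × Fin k) c) z =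
      (∑' z, R z * chanOp C f1 z) + (∑' z, R z * (a * g z.1)) + c := by
  have hw : ∀ z, |(f1 + (fun z : X × Fin k => a * g z.1) + Function.const (X × Fin k) c) z| ≤
      B1 + B2 + |c| := bound_triple hB1 hB2 c
  rw [tsum_corrupt_mul hRs hR0 hC0 hw (chanOp_bound C hw)]
  have hchan : chanOp C (f1 + (fun z : X × Fin k => a * g z.1) + Function.const (X × Fin k) c) =
      chanOp C f1 + (fun z : X × Fin k => a * g z.1) + Function.const (X × Fin k) c := by
    rw [chanOp_add, chanOp_add, chanOp_rowsum_one hC1 g a, chanOp_const hC1]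
  rw [hchan]
  exact tsum_pmf_decomp hRs hR0 hR1 (chanOp_bound C hB1) hB2 c

end MoreAux


theorem nnDist_original_le_kappa_mul_nnDist_corrupted {X : Type*} [Countable X] {m mt : ℕ} (hm : 0 < m) (hmt : 0 < mt)
    (α : Fin mt → Fin (m + mt) → ℝ)
    (hα0 : ∀ u i, 0 ≤ α u i) (hα1 : ∀ u i, α u i ≤ 1)
    (hαu : ∀ (u : Fin mt) (i : Fin (m + mt)), m ≤ (i : ℕ) → α u i = 0)
    (hfull : ∀ i : Fin (m + mt), (i : ℕ) < m → ∑ u, α u i < 1)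
    (P Q : X × Fin (m + mt) → ℝ) (hP : IsPMF P) (hQ : IsPMF Q)
    (hPz : ∀ (x : X) (y : Fin (m + mt)), m ≤ (y : ℕ) → P (x, y) = 0)
    (hQz : ∀ (x : X) (y : Fin (m + mt)), m ≤ (y : ℕ) → Q (x, y) = 0)
    (F : Set (X × Fin (m + mt) → ℝ))
    (hFbd : ∀ f ∈ F, ∃ B : ℝ, ∀ z, |f z| ≤ B)
    (hF : Assumption1 F) :
    nnDist F P Q ≤
      (⨆ i : Fin m, (1 + ∑ u, α u (Fin.castAdd mt i)) / (1 - ∑ u, α u (Fin.castAdd mt i))) *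
        nnDist F (corrupt P (confusion m mt α)) (corrupt Q (confusion m mt α)) := by
  classical
  obtain ⟨hP0, hPs, hP1⟩ := hP
  obtain ⟨hQ0, hQs, hQ1⟩ := hQ
  obtain ⟨F1, F2, hFeq, hF1inv, F2', hF2eq⟩ := hF
  have hkpos : 0 < m + mt := by omega
  set Cm := confusion m mt α with hCmdef
  set Ci := cinvM m mt α with hCidef
  have hC0 : ∀ i j, 0 ≤ Cm i j := confusion_nonneg hα0 hαu hfull
  have hC1 : ∀ i, ∑ j, Cm i j = 1 := fun i => confusion_rowsum i
  have hCnorm : matInfNorm Cm = 1 := matInfNorm_confusion hα0 hαu hfull hm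
  have hCC : Cm * Ci = 1 := confusion_mul_cinv hαu hfull
  haveI : Nonempty (Fin m) := ⟨⟨0, hm⟩⟩
  set K := (⨆ i : Fin m, (1 + ∑ u, α u (Fin.castAdd mt i)) / (1 - ∑ u, α u (Fin.castAdd mt i)))
    with hKdef
  -- κ' facts
  have hterm1 : ∀ i0 : Fin m,
      (1:ℝ) ≤ (1 + ∑ u, α u (Fin.castAdd mt i0)) / (1 - ∑ u, α u (Fin.castAdd mt i0)) := by
    intro i0
    have hpos := one_sub_sum_alpha_pos hαu hfull (Fin.castAdd mt i0)
    rw [le_div_iff₀ hpos]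
    have := sum_alpha_nonneg hα0 (Fin.castAdd mt i0)
    linarith
  have hK1 : (1:ℝ) ≤ K :=
    le_trans (hterm1 ⟨0, hm⟩)
      (le_ciSup (Finite.bddAbove_range fun i0 : Fin m =>
        (1 + ∑ u, α u (Fin.castAdd mt i0)) / (1 - ∑ u, α u (Fin.castAdd mt i0))) ⟨0, hm⟩)
  have hKpos : (0:ℝ) < K := lt_of_lt_of_le one_pos hK1
  have hrowabs := cinv_rowabs hα0 hαu hfull
  haveI : Nonempty (Fin (m + mt)) := ⟨⟨0, hkpos⟩⟩
  have hκK : matInfNorm Ci ≤ K := by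
    refine ciSup_le fun i => ?_
    rw [hrowabs i]
    split
    case isTrue him =>
      have hcast : Fin.castAdd mt ⟨(i:ℕ), him⟩ = i := Fin.ext (by simp)
      have h := le_ciSup (Finite.bddAbove_range fun i0 : Fin m =>
        (1 + ∑ u, α u (Fin.castAdd mt i0)) / (1 - ∑ u, α u (Fin.castAdd mt i0))) ⟨(i:ℕ), him⟩
      rw [hcast] at h
      exact h
    case isFalse him => exact hK1
  have hκ1 : (1:ℝ) ≤ matInfNorm Ci := by
    have h := hrowabs (Fin.natAdd m ⟨0, hmt⟩)
    rw [if_neg (by simp)] at h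
    rw [← h]
    exact le_ciSup (Finite.bddAbove_range fun i => ∑ j, |Ci i j|) _
  have hκpos : (0:ℝ) < matInfNorm Ci := lt_of_lt_of_le one_pos hκ1
  set κ := matInfNorm Ci with hκdef
  set T := κ⁻¹ • Ci with hTdef
  have hTnorm : matInfNorm T = 1 := matInfNorm_inv_smul hkpos Ci hκpos
  have hCiT : Ci = κ • T := by
    rw [hTdef, smul_smul, mul_inv_cancel₀ (ne_of_gt hκpos), one_smul]
  -- value functionals
  set D : (X × Fin (m + mt) → ℝ) → ℝ :=
    fun f => (∑' z, P z * f z) - ∑' z, Q z * f z with hDdef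
  set Dt : (X × Fin (m + mt) → ℝ) → ℝ :=
    fun f => (∑' z, corrupt P Cm z * f z) - ∑' z, corrupt Q Cm z * f z with hDtdef
  have hL : nnDist F P Q = sSup (D '' F) := by rw [hDdef]; rfl
  have hR : nnDist F (corrupt P Cm) (corrupt Q Cm) = sSup (Dt '' F) := by rw [hDtdef]; rfl
  rw [hL, hR]
  -- scalar pull-out for D
  have hDsmul : ∀ (c : ℝ) (w : X × Fin (m + mt) → ℝ),
      D (fun z => c * w z) = c * D w := by
    intro c w
    have hp : ∀ R : X × Fin (m + mt) → ℝ,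
        ∑' z, R z * (c * w z) = c * ∑' z, R z * w z := by
      intro R
      rw [← tsum_mul_left]
      exact tsum_congr fun z => by ring
    simp only [hDdef]
    rw [hp P, hp Q]
    ring
  -- the key κ-identity, no summability needed
  have hDkappa : ∀ f1 : X × Fin (m + mt) → ℝ,
      D f1 = κ * D (chanOp Cm (chanOp T f1)) := by
    intro f1
    have hfn : f1 = chanOp Cm (chanOp Ci f1) := by
      rw [chanOp_chanOp, hCC, chanOp_one]
    have h2 : chanOp Ci f1 = fun z => κ * chanOp T f1 z := by
      rw [hCiT, chanOp_smul]
    calc D f1 = D (chanOp Cm (chanOp Ci f1)) := by rw [← hfn]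
      _ = D (chanOp Cm (fun z => κ * chanOp T f1 z)) := by rw [h2]
      _ = D (fun z => κ * chanOp Cm (chanOp T f1) z) := by rw [chanOp_mul_fun]
      _ = κ * D (chanOp Cm (chanOp T f1)) := hDsmul κ _
  -- membership helper
  have memF : ∀ {f1 f2 : X × Fin (m + mt) → ℝ}, f1 ∈ F1 → f2 ∈ F2 → ∀ c : ℝ,
      f1 + f2 + Function.const (X × Fin (m + mt)) c ∈ F := by
    intro f1 f2 h1 h2 c
    rw [hFeq]
    exact ⟨f1, h1, f2, h2, c, rfl⟩
  -- empty case
  rcases Set.eq_empty_or_nonempty F with hFe | hFne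
  · rw [hFe, Set.image_empty, Set.image_empty, Real.sSup_empty, mul_zero]
  obtain ⟨f₀, hf₀F⟩ := hFne
  have hf₀ := hf₀F
  rw [hFeq] at hf₀
  obtain ⟨f1₀, hf1₀, f2₀, hf2₀, c₀, hf₀eq⟩ := hf₀
  have hg₀ := hf2₀
  rw [hF2eq] at hg₀
  obtain ⟨g₀, hg₀mem, a₀, ha₀0, ha₀1, hf2₀eq⟩ := hg₀
  -- the zero element of F2
  have hz2 : (fun z : X × Fin (m + mt) => (0:ℝ) * g₀ z.1) ∈ F2 := by
    rw [hF2eq]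
    exact ⟨g₀, hg₀mem, 0, le_refl 0, zero_le_one, rfl⟩
  -- boundedness of F1 elements
  have hBF1 : ∀ f1 ∈ F1, ∃ B : ℝ, ∀ z, |f1 z| ≤ B := by
    intro f1 h1
    obtain ⟨B, hB⟩ := hFbd _ (memF h1 hz2 0)
    refine ⟨B, fun z => ?_⟩
    have h := hB z
    simpa using h
  -- boundedness of F2 elements
  have hBF2 : ∀ f2 ∈ F2, ∃ B : ℝ, ∀ z, |f2 z| ≤ B := by
    intro f2 h2
    obtain ⟨B, hB⟩ := hFbd _ (memF hf1₀ h2 0)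
    obtain ⟨B1, hB1⟩ := hBF1 _ hf1₀
    refine ⟨B + B1, fun z => ?_⟩
    have h := hB z
    have he : f2 z = (f1₀ + f2 + Function.const (X × Fin (m + mt)) (0:ℝ)) z - f1₀ z := by
      simp
    rw [he, sub_eq_add_neg]
    calc |(f1₀ + f2 + Function.const (X × Fin (m + mt)) (0:ℝ)) z + -(f1₀ z)|
        ≤ |(f1₀ + f2 + Function.const (X × Fin (m + mt)) (0:ℝ)) z| + |(-(f1₀ z))| := abs_add_le _ _
      _ ≤ B + B1 := by rw [abs_neg]; exact add_le_add h (hB1 z)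
  -- D-decomposition
  have hDdecomp : ∀ (w1 : X × Fin (m + mt) → ℝ) (g : X → ℝ) (a c : ℝ) (B1 B2 : ℝ),
      (∀ z, |w1 z| ≤ B1) → (∀ z : X × Fin (m + mt), |a * g z.1| ≤ B2) →
      D (w1 + (fun z : X × Fin (m + mt) => a * g z.1) + Function.const (X × Fin (m + mt)) c) =
        D w1 + D (fun z : X × Fin (m + mt) => a * g z.1) := by
    intro w1 g a c B1 B2 hB1 hB2
    simp only [hDdef]
    rw [tsum_pmf_decomp hPs hP0 hP1 hB1 hB2 c, tsum_pmf_decomp hQs hQ0 hQ1 hB1 hB2 c]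
    ring
  -- Dt-transfer
  have hDtdecomp : ∀ (w1 : X × Fin (m + mt) → ℝ) (g : X → ℝ) (a c : ℝ) (B1 B2 : ℝ),
      (∀ z, |w1 z| ≤ B1) → (∀ z : X × Fin (m + mt), |a * g z.1| ≤ B2) →
      Dt (w1 + (fun z : X × Fin (m + mt) => a * g z.1) + Function.const (X × Fin (m + mt)) c) =
        D (chanOp Cm w1) + D (fun z : X × Fin (m + mt) => a * g z.1) := by
    intro w1 g a c B1 B2 hB1 hB2
    simp only [hDtdef, hDdef]
    rw [tsum_corrupt_decomp hPs hP0 hP1 hC0 hC1 hB1 g a hB2 c,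
      tsum_corrupt_decomp hQs hQ0 hQ1 hC0 hC1 hB1 g a hB2 c]
    ring
  -- key inequality for each member of F
  have key : ∀ f ∈ F, ∃ gst ∈ F, D f ≤ K * Dt gst := by
    intro f hf
    rw [hFeq] at hf
    obtain ⟨f1, hf1, f2, hf2, c, rfl⟩ := hf
    have hg2 := hf2
    rw [hF2eq] at hg2
    obtain ⟨g, hg, a, ha0, ha1, rfl⟩ := hg2
    obtain ⟨B1, hB1⟩ := hBF1 f1 hf1
    obtain ⟨B2, hB2⟩ := hBF2 _ hf2
    have hh1F1 : chanOp T f1 ∈ F1 := hF1inv T hTnorm f1 hf1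
    obtain ⟨Bh, hBh⟩ := hBF1 _ hh1F1
    have hDf : D (f1 + (fun z : X × Fin (m + mt) => a * g z.1) +
        Function.const (X × Fin (m + mt)) c) =
        κ * D (chanOp Cm (chanOp T f1)) + D (fun z : X × Fin (m + mt) => a * g z.1) := by
      rw [hDdecomp f1 g a c B1 B2 hB1 hB2, hDkappa f1]
    set δ := D (chanOp Cm (chanOp T f1)) with hδdef
    set w := D (fun z : X × Fin (m + mt) => a * g z.1) with hwdef
    -- scaled f2
    have hf2' : (fun z : X × Fin (m + mt) => (a * K⁻¹) * g z.1) ∈ F2 := by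
      rw [hF2eq]
      refine ⟨g, hg, a * K⁻¹, by positivity, ?_, rfl⟩
      calc a * K⁻¹ ≤ 1 * 1 := by
            apply mul_le_mul ha1 _ (by positivity) zero_le_one
            rw [inv_le_one_iff₀]
            right; exact hK1
        _ = 1 := by norm_num
    have hB2' : ∀ z : X × Fin (m + mt), |(a * K⁻¹) * g z.1| ≤ K⁻¹ * B2 := by
      intro z
      have : (a * K⁻¹) * g z.1 = K⁻¹ * (a * g z.1) := by ring
      rw [this, abs_mul, abs_of_nonneg (by positivity : (0:ℝ) ≤ K⁻¹)]
      exact mul_le_mul_of_nonneg_left (hB2 z) (by positivity)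
    have hDf2' : D (fun z : X × Fin (m + mt) => (a * K⁻¹) * g z.1) = K⁻¹ * w := by
      have he : (fun z : X × Fin (m + mt) => (a * K⁻¹) * g z.1) =
          fun z : X × Fin (m + mt) => K⁻¹ * (a * g z.1) := by
        funext z; ring
      rw [he, hDsmul]
    by_cases hδ0 : 0 ≤ δ
    · refine ⟨chanOp T f1 + (fun z : X × Fin (m + mt) => (a * K⁻¹) * g z.1) +
        Function.const (X × Fin (m + mt)) (0:ℝ), memF hh1F1 hf2' 0, ?_⟩
      have hDt : Dt (chanOp T f1 + (fun z : X × Fin (m + mt) => (a * K⁻¹) * g z.1) +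
          Function.const (X × Fin (m + mt)) (0:ℝ)) = δ + K⁻¹ * w := by
        rw [hDtdecomp (chanOp T f1) g (a * K⁻¹) 0 Bh (K⁻¹ * B2) hBh hB2', hDf2']
      rw [hDf, hDt]
      have hexp : K * (δ + K⁻¹ * w) = K * δ + w := by
        field_simp
      rw [hexp]
      have : κ * δ ≤ K * δ := mul_le_mul_of_nonneg_right hκK hδ0
      linarith
    · push_neg at hδ0
      have hnegF1 : chanOp (-1 : Matrix (Fin (m + mt)) (Fin (m + mt)) ℝ) (chanOp T f1) ∈ F1 :=
        hF1inv _ (matInfNorm_neg_one hkpos) _ hh1F1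
      have hBneg : ∀ z, |chanOp (-1 : Matrix (Fin (m + mt)) (Fin (m + mt)) ℝ)
          (chanOp T f1) z| ≤ Bh := by
        intro z
        rw [chanOp_neg_one]
        rw [abs_neg]
        exact hBh z
      refine ⟨chanOp (-1 : Matrix (Fin (m + mt)) (Fin (m + mt)) ℝ) (chanOp T f1) +
        (fun z : X × Fin (m + mt) => (a * K⁻¹) * g z.1) +
        Function.const (X × Fin (m + mt)) (0:ℝ), memF hnegF1 hf2' 0, ?_⟩
      have hDneg : D (chanOp Cm (chanOp (-1 : Matrix (Fin (m + mt)) (Fin (m + mt)) ℝ)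
          (chanOp T f1))) = -δ := by
        rw [chanOp_neg_one]
        have h1 : chanOp Cm (fun z => -(chanOp T f1 z)) =
            fun z => (-1 : ℝ) * chanOp Cm (chanOp T f1) z := by
          have he : (fun z : X × Fin (m + mt) => -(chanOp T f1 z)) =
              fun z : X × Fin (m + mt) => (-1 : ℝ) * chanOp T f1 z := by
            funext z; ring
          rw [he, chanOp_mul_fun]
        rw [h1, hDsmul]
        ring
      have hDt : Dt (chanOp (-1 : Matrix (Fin (m + mt)) (Fin (m + mt)) ℝ) (chanOp T f1) +
          (fun z : X × Fin (m + mt) => (a * K⁻¹) * g z.1) +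
          Function.const (X × Fin (m + mt)) (0:ℝ)) = -δ + K⁻¹ * w := by
        rw [hDtdecomp _ g (a * K⁻¹) 0 Bh (K⁻¹ * B2) hBneg hB2', hDf2', hDneg]
      rw [hDf, hDt]
      have hexp : K * (-δ + K⁻¹ * w) = -(K * δ) + w := by
        field_simp
      rw [hexp]
      have h1 : κ * δ ≤ 0 := le_of_lt (mul_neg_of_pos_of_neg hκpos hδ0)
      have h2 : 0 ≤ -(K * δ) := by nlinarith
      linarith
  -- Dt-image is contained in D-image
  have hsub : Dt '' F ⊆ D '' F := by
    rintro v ⟨f, hfF, rfl⟩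
    rw [hFeq] at hfF
    obtain ⟨f1, hf1, f2, hf2, c, rfl⟩ := hfF
    have hg2 := hf2
    rw [hF2eq] at hg2
    obtain ⟨g, hg, a, ha0, ha1, rfl⟩ := hg2
    obtain ⟨B1, hB1⟩ := hBF1 f1 hf1
    obtain ⟨B2, hB2⟩ := hBF2 _ hf2
    refine ⟨chanOp Cm f1 + (fun z : X × Fin (m + mt) => a * g z.1) +
      Function.const (X × Fin (m + mt)) c, memF (hF1inv Cm hCnorm f1 hf1) hf2 c, ?_⟩
    rw [hDdecomp (chanOp Cm f1) g a c _ B2 (chanOp_bound Cm hB1) hB2,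
      hDtdecomp f1 g a c B1 B2 hB1 hB2]
  -- a nonnegative element bound for sSup (Dt '' F)
  have hb0 : ∀ z : X × Fin (m + mt), |(0:ℝ) * g₀ z.1| ≤ (0:ℝ) := by
    intro z; simp
  obtain ⟨B10, hB10⟩ := hBF1 f1₀ hf1₀
  have hDz2 : D (fun z : X × Fin (m + mt) => (0:ℝ) * g₀ z.1) = 0 := by
    have he : (fun z : X × Fin (m + mt) => (0:ℝ) * g₀ z.1) =
        fun z : X × Fin (m + mt) => (0:ℝ) * ((0:ℝ) * g₀ z.1) := by
      funext z; ring
    rw [he, hDsmul]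
    ring
  have hmemu : Dt (f1₀ + (fun z : X × Fin (m + mt) => (0:ℝ) * g₀ z.1) +
      Function.const (X × Fin (m + mt)) (0:ℝ)) ∈ Dt '' F :=
    ⟨_, memF hf1₀ hz2 0, rfl⟩
  have hval_u : Dt (f1₀ + (fun z : X × Fin (m + mt) => (0:ℝ) * g₀ z.1) +
      Function.const (X × Fin (m + mt)) (0:ℝ)) = D (chanOp Cm f1₀) := by
    rw [hDtdecomp f1₀ g₀ 0 0 B10 0 hB10 hb0, hDz2, add_zero]
  have hBneg0 : ∀ z, |chanOp (-1 : Matrix (Fin (m + mt)) (Fin (m + mt)) ℝ) f1₀ z| ≤ B10 := by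
    intro z
    rw [chanOp_neg_one, abs_neg]
    exact hB10 z
  have hmemv : Dt (chanOp (-1 : Matrix (Fin (m + mt)) (Fin (m + mt)) ℝ) f1₀ +
      (fun z : X × Fin (m + mt) => (0:ℝ) * g₀ z.1) +
      Function.const (X × Fin (m + mt)) (0:ℝ)) ∈ Dt '' F :=
    ⟨_, memF (hF1inv _ (matInfNorm_neg_one hkpos) _ hf1₀) hz2 0, rfl⟩
  have hval_v : Dt (chanOp (-1 : Matrix (Fin (m + mt)) (Fin (m + mt)) ℝ) f1₀ +
      (fun z : X × Fin (m + mt) => (0:ℝ) * g₀ z.1) +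
      Function.const (X × Fin (m + mt)) (0:ℝ)) = -(D (chanOp Cm f1₀)) := by
    rw [hDtdecomp _ g₀ 0 0 B10 0 hBneg0 hb0, hDz2, add_zero]
    rw [chanOp_neg_one]
    have h1 : chanOp Cm (fun z => -(f1₀ z)) =
        fun z => (-1 : ℝ) * chanOp Cm f1₀ z := by
      have he : (fun z : X × Fin (m + mt) => -(f1₀ z)) =
          fun z : X × Fin (m + mt) => (-1 : ℝ) * f1₀ z := by
        funext z; ring
      rw [he, chanOp_mul_fun]
    rw [h1, hDsmul]
    ring
  have hDtnonneg : BddAbove (Dt '' F) → 0 ≤ sSup (Dt '' F) := by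
    intro hbdd
    rcases le_or_gt 0 (D (chanOp Cm f1₀)) with h | h
    · have := le_csSup hbdd hmemu
      rw [hval_u] at this
      linarith
    · have := le_csSup hbdd hmemv
      rw [hval_v] at this
      linarith
  -- final assembly
  by_cases hbdd : BddAbove (D '' F)
  · have hbddt : BddAbove (Dt '' F) := hbdd.mono hsub
    refine Real.sSup_le ?_ (mul_nonneg hKpos.le (hDtnonneg hbddt))
    rintro v ⟨f, hfF, rfl⟩
    obtain ⟨gst, hgst, hle⟩ := key f hfF
    exact hle.trans (mul_le_mul_of_nonneg_left (le_csSup hbddt ⟨gst, hgst, rfl⟩) hKpos.le)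
  · rw [Real.sSup_of_not_bddAbove hbdd]
    by_cases hbddt : BddAbove (Dt '' F)
    · exact mul_nonneg hKpos.le (hDtnonneg hbddt)
    · rw [Real.sSup_of_not_bddAbove hbddt, mul_zero]
end

section
/- In the missing-labels model with ᾱ = max_{y<m} α^{(y)} < 1, the Jensen–Shannon divergence satisfies d_JS(P, Q) ≤ (1/(1 − ᾱ)) · √(8 · d_JS(P̃, Q̃)). (Corollary 1, eq. (11).) -/
open scoped BigOperators
open MeasureTheory

/-- Kullback–Leibler divergence of probability mass functions. -/
noncomputable def klDiv {Z : Type*} (P M : Z → ℝ) : ℝ :=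
  ∑' z, P z * Real.log (P z / M z)

/-- Jensen–Shannon divergence of probability mass functions. -/
noncomputable def jsDiv {Z : Type*} (P Q : Z → ℝ) : ℝ :=
  (1 / 2) * klDiv P (fun z => (P z + Q z) / 2) +
    (1 / 2) * klDiv Q (fun z => (P z + Q z) / 2)

/-- The missing-labels parameter vector on `Fin (m+1)`: `α^{(y)}` on class labels, `0` on
the missing-label symbol `m`. -/
noncomputable def missAlpha (m : ℕ) (αv : Fin m → ℝ) : Fin (m + 1) → ℝ :=
  fun i => if h : (i : ℕ) < m then αv ⟨i, h⟩ else 0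

/-- Confusion matrix of the missing-labels model:
`C = diag(𝟙 − α_m) + α_m e_m^T`. -/
noncomputable def missConfusion (m : ℕ) (αv : Fin m → ℝ) :
    Matrix (Fin (m + 1)) (Fin (m + 1)) ℝ :=
  Matrix.diagonal (fun i => 1 - missAlpha m αv i) +
    Matrix.vecMulVec (missAlpha m αv) (Pi.single (Fin.last m) 1)


/-- pointwise JS integrand -/
noncomputable def jsTerm (p q : ℝ) : ℝ :=
  1 / 2 * (p * Real.log (p / ((p + q) / 2))) + 1 / 2 * (q * Real.log (q / ((p + q) / 2)))

lemma term_lb {p q : ℝ} (hp : 0 ≤ p) (hq : 0 ≤ q) :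
    p - (p + q) / 2 ≤ p * Real.log (p / ((p + q) / 2)) := by
  rcases eq_or_lt_of_le hp with h | h
  · rw [← h]; simp; linarith
  · have hm0 : 0 < (p + q) / 2 := by linarith
    have h1 : Real.log (((p + q) / 2) / p) ≤ ((p + q) / 2) / p - 1 :=
      Real.log_le_sub_one_of_pos (by positivity)
    have h2 : p * Real.log (((p + q) / 2) / p) ≤ (p + q) / 2 - p := by
      have := mul_le_mul_of_nonneg_left h1 h.le
      calc p * Real.log (((p + q) / 2) / p) ≤ p * (((p + q) / 2) / p - 1) := this
        _ = (p + q) / 2 - p := by field_simp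
    have h3 : Real.log (p / ((p + q) / 2)) = -Real.log (((p + q) / 2) / p) := by
      rw [← Real.log_inv]; congr 1; field_simp
    rw [h3]; nlinarith

lemma term_ub {p q : ℝ} (hp : 0 ≤ p) (hq : 0 ≤ q) :
    p * Real.log (p / ((p + q) / 2)) ≤ p * Real.log 2 := by
  rcases eq_or_lt_of_le hp with h | h
  · rw [← h]; simp
  · have hm0 : 0 < (p + q) / 2 := by linarith
    have h1 : p / ((p + q) / 2) ≤ 2 := by
      rw [div_le_iff₀ hm0]; linarith
    exact mul_le_mul_of_nonneg_left (Real.log_le_log (by positivity) h1) hp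

lemma jsTerm_nonneg {p q : ℝ} (hp : 0 ≤ p) (hq : 0 ≤ q) : 0 ≤ jsTerm p q := by
  have h1 := term_lb hp hq
  have h2 := term_lb hq hp
  rw [add_comm q p] at h2
  unfold jsTerm; nlinarith

lemma jsTerm_le {p q : ℝ} (hp : 0 ≤ p) (hq : 0 ≤ q) : jsTerm p q ≤ (p + q) / 2 := by
  have h1 := term_ub hp hq
  have h2 := term_ub hq hp
  rw [add_comm q p] at h2
  have hlog2 : Real.log 2 ≤ 1 := by
    have := Real.log_le_sub_one_of_pos (by norm_num : (0:ℝ) < 2); linarith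
  unfold jsTerm; nlinarith [mul_le_mul_of_nonneg_left hlog2 hp, mul_le_mul_of_nonneg_left hlog2 hq]

lemma jsTerm_homog {c p q : ℝ} (hc : 0 < c) : jsTerm (c * p) (c * q) = c * jsTerm p q := by
  have e1 : c * p / ((c * p + c * q) / 2) = p / ((p + q) / 2) := by
    rw [show c * p + c * q = c * (p + q) by ring]
    rw [mul_div_assoc c (p + q) 2, mul_div_mul_left _ _ hc.ne']
  have e2 : c * q / ((c * p + c * q) / 2) = q / ((p + q) / 2) := by
    rw [show c * p + c * q = c * (p + q) by ring]
    rw [mul_div_assoc c (p + q) 2, mul_div_mul_left _ _ hc.ne']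
  unfold jsTerm; rw [e1, e2]; ring

lemma summable_klterm {Z : Type*} {P Q : Z → ℝ} (hP0 : ∀ z, 0 ≤ P z) (hQ0 : ∀ z, 0 ≤ Q z)
    (hPs : Summable P) (hQs : Summable Q) :
    Summable (fun z => P z * Real.log (P z / ((P z + Q z) / 2))) := by
  have hlog2 : Real.log 2 ≤ 1 := by
    have := Real.log_le_sub_one_of_pos (by norm_num : (0:ℝ) < 2); linarith
  have key : Summable (fun z => P z * Real.log (P z / ((P z + Q z) / 2)) + (P z + Q z)) := by
    refine Summable.of_nonneg_of_le (fun z => ?_) (fun z => ?_)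
      (((hPs.add hQs).add hPs))
    · have := term_lb (hP0 z) (hQ0 z)
      have := hP0 z; have := hQ0 z; linarith
    · have := term_ub (hP0 z) (hQ0 z)
      have h2 : P z * Real.log 2 ≤ P z := by
        nlinarith [mul_le_mul_of_nonneg_left hlog2 (hP0 z)]
      show _ ≤ (P z + Q z) + P z
      linarith
  have := key.sub (hPs.add hQs)
  simpa using this

lemma summable_jsTerm {Z : Type*} {P Q : Z → ℝ} (hP0 : ∀ z, 0 ≤ P z) (hQ0 : ∀ z, 0 ≤ Q z)
    (hPs : Summable P) (hQs : Summable Q) :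
    Summable (fun z => jsTerm (P z) (Q z)) := by
  have h1 := (summable_klterm hP0 hQ0 hPs hQs).mul_left (1/2)
  have h2 := (summable_klterm hQ0 hP0 hQs hPs).mul_left (1/2)
  have h2' : Summable (fun z => 1/2 * (Q z * Real.log (Q z / ((P z + Q z) / 2)))) := by
    refine h2.congr fun z => ?_
    rw [add_comm (Q z) (P z)]
  exact (h1.add h2').congr fun z => by unfold jsTerm; ring

lemma jsDiv_eq_tsum {Z : Type*} {P Q : Z → ℝ} (hP0 : ∀ z, 0 ≤ P z) (hQ0 : ∀ z, 0 ≤ Q z)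
    (hPs : Summable P) (hQs : Summable Q) :
    jsDiv P Q = ∑' z, jsTerm (P z) (Q z) := by
  have h1 := (summable_klterm hP0 hQ0 hPs hQs).mul_left (1/2)
  have h2' : Summable (fun z => 1/2 * (Q z * Real.log (Q z / ((P z + Q z) / 2)))) := by
    refine ((summable_klterm hQ0 hP0 hQs hPs).mul_left (1/2)).congr fun z => ?_
    rw [add_comm (Q z) (P z)]
  unfold jsDiv klDiv
  rw [← tsum_mul_left, ← tsum_mul_left, ← Summable.tsum_add h1 h2']
  rfl

lemma missAlpha_nonneg {m : ℕ} {αv : Fin m → ℝ} (h : ∀ y, 0 ≤ αv y) (i : Fin (m+1)) :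
    0 ≤ missAlpha m αv i := by
  unfold missAlpha; split
  · exact h _
  · exact le_refl 0
lemma missAlpha_le_one {m : ℕ} {αv : Fin m → ℝ} (h : ∀ y, αv y ≤ 1) (i : Fin (m+1)) :
    missAlpha m αv i ≤ 1 := by
  unfold missAlpha; split
  · exact h _
  · norm_num

lemma missConfusion_nonneg {m : ℕ} {αv : Fin m → ℝ} (h0 : ∀ y, 0 ≤ αv y) (h1 : ∀ y, αv y ≤ 1)
    (j y : Fin (m+1)) : 0 ≤ missConfusion m αv j y := by
  have a := missAlpha_nonneg h0 j
  have b := missAlpha_le_one h1 j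
  unfold missConfusion
  simp only [Matrix.add_apply, Matrix.diagonal_apply, Matrix.vecMulVec_apply, Pi.single_apply]
  split <;> split <;> simp <;> linarith

lemma missConfusion_rowsum {m : ℕ} {αv : Fin m → ℝ} (j : Fin (m+1)) :
    ∑ y, missConfusion m αv j y = 1 := by
  unfold missConfusion
  simp only [Matrix.add_apply, Matrix.diagonal_apply, Matrix.vecMulVec_apply, Pi.single_apply]
  rw [Finset.sum_add_distrib]
  rw [Finset.sum_ite_eq Finset.univ j (fun _ => 1 - missAlpha m αv j)]
  simp [mul_ite, Finset.sum_ite_eq']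

lemma corrupt_apply_ne_last {X : Type*} {m : ℕ} (αv : Fin m → ℝ) (R : X × Fin (m+1) → ℝ)
    (x : X) (y : Fin (m+1)) (hy : y ≠ Fin.last m) :
    corrupt R (missConfusion m αv) (x, y) = (1 - missAlpha m αv y) * R (x, y) := by
  unfold corrupt missConfusion
  simp only [Matrix.add_apply, Matrix.diagonal_apply, Matrix.vecMulVec_apply, Pi.single_apply,
    if_neg hy, mul_zero, add_zero, mul_ite]
  rw [Finset.sum_ite_eq' Finset.univ y (fun j => R (x, j) * (1 - missAlpha m αv j))]
  simp [mul_comm]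

lemma corrupt_pmf {X : Type*} {k : ℕ} {R : X × Fin k → ℝ} {C : Matrix (Fin k) (Fin k) ℝ}
    (hR0 : ∀ z, 0 ≤ R z) (hRs : Summable R) (hR1 : ∑' z, R z = 1)
    (hC0 : ∀ j y, 0 ≤ C j y) (hCrow : ∀ j, ∑ y, C j y = 1) :
    (∀ z, 0 ≤ corrupt R C z) ∧ Summable (corrupt R C) ∧ ∑' z, corrupt R C z = 1 := by
  have h0 : ∀ z, 0 ≤ corrupt R C z := fun z =>
    Finset.sum_nonneg fun j _ => mul_nonneg (hR0 _) (hC0 _ _)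
  have hsum_eq : ∀ x : X, ∑ y, corrupt R C (x, y) = ∑ j, R (x, j) := by
    intro x
    unfold corrupt
    rw [Finset.sum_comm]
    refine Finset.sum_congr rfl fun j _ => ?_
    show ∑ y : Fin k, R (x, j) * C j y = R (x, j)
    rw [← Finset.mul_sum, hCrow j, mul_one]
  have hfacR := (summable_prod_of_nonneg (fun z => hR0 z)).mp hRs
  have hxsum : Summable (fun x : X => ∑' y, corrupt R C (x, y)) := by
    refine hfacR.2.congr fun x => ?_
    rw [tsum_fintype, tsum_fintype, hsum_eq]
  have hs : Summable (corrupt R C) :=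
    (summable_prod_of_nonneg (fun z => h0 z)).mpr ⟨fun x => Summable.of_finite, hxsum⟩
  refine ⟨h0, hs, ?_⟩
  rw [Summable.tsum_prod' hs fun x => Summable.of_finite]
  have he : ∀ x : X, ∑' y, corrupt R C (x, y) = ∑' j, R (x, j) := fun x => by
    rw [tsum_fintype, tsum_fintype, hsum_eq]
  rw [tsum_congr he, ← Summable.tsum_prod' hRs fun x => Summable.of_finite, hR1]


theorem miss_js_bound {X : Type*} [Countable X] {m : ℕ} (hm : 0 < m) (αv : Fin m → ℝ)
    (hαv0 : ∀ y, 0 ≤ αv y) (hαv1 : ∀ y, αv y ≤ 1)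
    (hbar : (⨆ y, αv y) < 1)
    (P Q : X × Fin (m + 1) → ℝ) (hP : IsPMF P) (hQ : IsPMF Q)
    (hPz : ∀ x : X, P (x, Fin.last m) = 0) (hQz : ∀ x : X, Q (x, Fin.last m) = 0) :
    jsDiv P Q ≤ (1 / (1 - ⨆ y, αv y)) *
      Real.sqrt (8 * jsDiv (corrupt P (missConfusion m αv)) (corrupt Q (missConfusion m αv))) := by
  obtain ⟨hP0, hPs, hP1⟩ := hP
  obtain ⟨hQ0, hQs, hQ1⟩ := hQ
  set α' := ⨆ y, αv y with hα'
  have hbdd : BddAbove (Set.range αv) := (Set.finite_range αv).bddAbove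
  have hα'0 : 0 ≤ α' := le_trans (hαv0 ⟨0, hm⟩) (le_ciSup hbdd ⟨0, hm⟩)
  have hβle : ∀ i : Fin (m+1), missAlpha m αv i ≤ α' := by
    intro i; unfold missAlpha; split
    · exact le_ciSup hbdd _
    · exact hα'0
  have hC0 := missConfusion_nonneg hαv0 hαv1
  have hCrow : ∀ j : Fin (m+1), ∑ y, missConfusion m αv j y = 1 := fun j => missConfusion_rowsum j
  obtain ⟨hPt0, hPts, hPt1⟩ := corrupt_pmf hP0 hPs hP1 hC0 hCrow
  obtain ⟨hQt0, hQts, hQt1⟩ := corrupt_pmf hQ0 hQs hQ1 hC0 hCrow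
  set Pt := corrupt P (missConfusion m αv) with hPtdef
  set Qt := corrupt Q (missConfusion m αv) with hQtdef
  have hSt_sum : Summable (fun z => jsTerm (Pt z) (Qt z)) := summable_jsTerm hPt0 hQt0 hPts hQts
  have hS_sum : Summable (fun z => jsTerm (P z) (Q z)) := summable_jsTerm hP0 hQ0 hPs hQs
  have hS : jsDiv P Q = ∑' z, jsTerm (P z) (Q z) := jsDiv_eq_tsum hP0 hQ0 hPs hQs
  have hStEq : jsDiv Pt Qt = ∑' z, jsTerm (Pt z) (Qt z) := jsDiv_eq_tsum hPt0 hQt0 hPts hQts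
  have h1α : 0 < 1 - α' := by linarith
  have step2 : ∀ z : X × Fin (m+1),
      (1 - missAlpha m αv z.2) * jsTerm (P z) (Q z) ≤ jsTerm (Pt z) (Qt z) := by
    rintro ⟨x, y⟩
    by_cases hy : y = Fin.last m
    · subst hy
      have h00 : jsTerm (P (x, Fin.last m)) (Q (x, Fin.last m)) = 0 := by
        rw [hPz x, hQz x]; unfold jsTerm; norm_num
      rw [h00, mul_zero]
      exact jsTerm_nonneg (hPt0 _) (hQt0 _)
    · have hc : 0 < 1 - missAlpha m αv y := by have := hβle y; linarith
      have e1 : Pt (x, y) = (1 - missAlpha m αv y) * P (x, y) :=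
        corrupt_apply_ne_last αv P x y hy
      have e2 : Qt (x, y) = (1 - missAlpha m αv y) * Q (x, y) :=
        corrupt_apply_ne_last αv Q x y hy
      rw [e1, e2, jsTerm_homog hc]
  have hg_sum : Summable
      (fun z : X × Fin (m+1) => (1 - missAlpha m αv z.2) * jsTerm (P z) (Q z)) :=
    Summable.of_nonneg_of_le
      (fun z => mul_nonneg (by have := hβle z.2; linarith)
        (jsTerm_nonneg (hP0 z) (hQ0 z))) step2 hSt_sum
  have step1 : ∀ z : X × Fin (m+1),
      (1 - α') * jsTerm (P z) (Q z) ≤ (1 - missAlpha m αv z.2) * jsTerm (P z) (Q z) :=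
    fun z => mul_le_mul_of_nonneg_right (by have := hβle z.2; linarith)
      (jsTerm_nonneg (hP0 z) (hQ0 z))
  have claimA : (1 - α') * ∑' z, jsTerm (P z) (Q z) ≤ ∑' z, jsTerm (Pt z) (Qt z) := by
    rw [← tsum_mul_left]
    exact le_trans (Summable.tsum_le_tsum step1 (hS_sum.mul_left _) hg_sum)
      (Summable.tsum_le_tsum step2 hg_sum hSt_sum)
  have hSt0 : 0 ≤ ∑' z, jsTerm (Pt z) (Qt z) :=
    tsum_nonneg fun z => jsTerm_nonneg (hPt0 z) (hQt0 z)
  have hSt1 : ∑' z, jsTerm (Pt z) (Qt z) ≤ 1 := by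
    have hb : Summable (fun z => (Pt z + Qt z) / 2) := (hPts.add hQts).div_const 2
    have h1 := Summable.tsum_le_tsum (fun z => jsTerm_le (hPt0 z) (hQt0 z)) hSt_sum hb
    have he : ∑' z, (Pt z + Qt z) / 2 = 1 := by
      have h2 : ∑' z, (Pt z + Qt z) / 2 = (1/2) * ∑' z, (Pt z + Qt z) := by
        rw [← tsum_mul_left]
        exact tsum_congr fun z => by ring
      rw [h2, Summable.tsum_add hPts hQts, hPt1, hQt1]; norm_num
    linarith
  rw [hS, hStEq]
  set St := ∑' z, jsTerm (Pt z) (Qt z) with hStdef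
  have hsqrt : St ≤ Real.sqrt (8 * St) :=
    calc St = Real.sqrt (St ^ 2) := (Real.sqrt_sq hSt0).symm
      _ ≤ Real.sqrt (8 * St) := Real.sqrt_le_sqrt (by nlinarith)
  calc ∑' z, jsTerm (P z) (Q z) ≤ St / (1 - α') := by
        rw [le_div_iff₀ h1α]; linarith [claimA]
    _ ≤ Real.sqrt (8 * St) / (1 - α') := by gcongr
    _ = 1 / (1 - α') * Real.sqrt (8 * St) := by ring
end
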